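/- Let Z ⊆ ℝ^d be a zonotope with generator set 𝒢 all of whose extreme points lie in {0,1/2,1}^d. Then for every index i with 1 ≤ i ≤ d, at most two generators g ∈ 𝒢 have i-th coordinate g_i ≠ 0; moreover, if there are exactly two such generators, then the absolute value of the i-th coordinate of each of them equals 1/2. -/

import Mathlib

open Set Pointwise

noncomputable section

/-- `Z` is a zonotope with generator set `G`: `Z = t + Σ_{g ∈ G} conv{0,g}` for some
translation `t`, where the generators are nonzero and pairwise non-collinear. -/
def IsZonotopeWithGenerators {d : ℕ} (Z : Set (Fin d → ℝ)) (G : Finset (Fin d → ℝ)) : Prop :=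
  (∀ g ∈ G, g ≠ 0) ∧
  (∀ g ∈ G, ∀ h ∈ G, g ≠ h → ∀ r : ℝ, g ≠ r • h) ∧
  ∃ t : Fin d → ℝ,
    Z = {x | ∃ c : (Fin d → ℝ) → ℝ, (∀ g, 0 ≤ c g ∧ c g ≤ 1) ∧ x = t + ∑ g ∈ G, c g • g}

/-- A set is half-integral when all of its extreme points have coordinates in `{0,1/2,1}`. -/
def IsHalfIntegral {d : ℕ} (P : Set (Fin d → ℝ)) : Prop :=
  ∀ x ∈ Set.extremePoints ℝ P, ∀ i, x i = 0 ∨ x i = 1/2 ∨ x i = 1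

open scoped Classical


namespace HIZaux

variable {d : ℕ}

/-- Dot product as a linear map in the second argument. -/
def dpL (y : Fin d → ℝ) : (Fin d → ℝ) →ₗ[ℝ] ℝ where
  toFun x := ∑ j, y j * x j
  map_add' a b := by simp [mul_add, Finset.sum_add_distrib]
  map_smul' r a := by
    simp only [Pi.smul_apply, smul_eq_mul, RingHom.id_apply, Finset.mul_sum]
    exact Finset.sum_congr rfl fun j _ => by ring

lemma dpL_comm (y x : Fin d → ℝ) : dpL y x = dpL x y := by
  show (∑ j, y j * x j) = ∑ j, x j * y j
  exact Finset.sum_congr rfl fun j _ => mul_comm _ _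

lemma dpL_self_pos {y : Fin d → ℝ} (hy : y ≠ 0) : 0 < dpL y y := by
  have h : ∃ j, y j ≠ 0 := by
    by_contra h
    push_neg at h
    exact hy (funext h)
  obtain ⟨j, hj⟩ := h
  have : (0:ℝ) < ∑ k, y k * y k := by
    apply Finset.sum_pos' (fun k _ => mul_self_nonneg _)
    exact ⟨j, Finset.mem_univ j, mul_self_pos.2 hj⟩
  exact this

lemma dpL_add_left (y z x : Fin d → ℝ) : dpL (y + z) x = dpL y x + dpL z x := by
  rw [dpL_comm, map_add, dpL_comm x y, dpL_comm x z]

lemma dpL_smul_left (r : ℝ) (y x : Fin d → ℝ) : dpL (r • y) x = r * dpL y x := by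
  rw [dpL_comm, map_smul, dpL_comm x y]; rfl

lemma dpL_neg_left (y x : Fin d → ℝ) : dpL (-y) x = -(dpL y x) := by
  rw [dpL_comm, map_neg, dpL_comm x y]

lemma dpL_single (i : Fin d) (g : Fin d → ℝ) : dpL (Pi.single i 1) g = g i := by
  show (∑ j, (Pi.single i (1:ℝ) : Fin d → ℝ) j * g j) = g i
  rw [Finset.sum_eq_single i]
  · simp
  · intro j _ hj; simp [Pi.single_apply, hj]
  · intro h; exact absurd (Finset.mem_univ i) h

/-- A generic vector: nonzero dot product with every element of a finite set of
nonzero vectors. -/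
lemma exists_generic (B : Finset (Fin d → ℝ)) (hB : ∀ v ∈ B, v ≠ 0) :
    ∃ y, ∀ v ∈ B, dpL y v ≠ 0 := by
  induction B using Finset.induction_on with
  | empty => exact ⟨0, by simp⟩
  | @insert v s hvs ih =>
    obtain ⟨y, hy⟩ := ih (fun u hu => hB u (Finset.mem_insert_of_mem hu))
    have hv0 : v ≠ 0 := hB v (Finset.mem_insert_self v s)
    set bad : Finset ℝ :=
      ((insert v s).filter (fun g => dpL v g ≠ 0)).image
        (fun g => -(dpL y g) / (dpL v g)) with hbad
    obtain ⟨c, hc⟩ := Infinite.exists_notMem_finset bad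
    refine ⟨y + c • v, fun g hg => ?_⟩
    rw [dpL_add_left, dpL_smul_left]
    by_cases hvg : dpL v g = 0
    · have hgs : g ∈ s := by
        rcases Finset.mem_insert.1 hg with h | h
        · exact absurd hvg (by rw [h]; exact (dpL_self_pos hv0).ne')
        · exact h
      rw [hvg, mul_zero, add_zero]
      exact hy g hgs
    · intro habs
      apply hc
      rw [hbad]
      refine Finset.mem_image.2 ⟨g, Finset.mem_filter.2 ⟨hg, hvg⟩, ?_⟩
      field_simp
      linarith
/-- A vector orthogonal to `v` but non-orthogonal to every member of `B`,
provided no member of `B` is a multiple of `v`. -/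
lemma exists_generic_perp {v : Fin d → ℝ} (hv : v ≠ 0) (B : Finset (Fin d → ℝ))
    (hB : ∀ h ∈ B, ∀ r : ℝ, h ≠ r • v) :
    ∃ y, dpL y v = 0 ∧ ∀ h ∈ B, dpL y h ≠ 0 := by
  have hq : (0:ℝ) < dpL v v := dpL_self_pos hv
  set P : (Fin d → ℝ) → (Fin d → ℝ) := fun h => h - (dpL v h / dpL v v) • v with hP
  have hBnz : ∀ w ∈ B.image P, w ≠ 0 := by
    intro w hw
    obtain ⟨h, hh, rfl⟩ := Finset.mem_image.1 hw
    intro h0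
    apply hB h hh (dpL v h / dpL v v)
    have := sub_eq_zero.1 h0
    exact this
  obtain ⟨y₀, hy₀⟩ := exists_generic (B.image P) hBnz
  refine ⟨P y₀, ?_, ?_⟩
  · rw [hP]
    simp only
    rw [dpL_comm, map_sub, map_smul, dpL_comm v y₀]
    simp only [smul_eq_mul]
    field_simp
    ring
  · intro h hh
    have key : dpL (P y₀) h = dpL y₀ (P h) := by
      rw [hP]
      simp only
      rw [dpL_comm, map_sub, map_smul, map_sub, map_smul, dpL_comm h y₀,
        dpL_comm h v, dpL_comm v y₀]
      simp only [smul_eq_mul]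
      ring
    rw [key]
    exact hy₀ (P h) (Finset.mem_image_of_mem P hh)

/-- Perturbation: a small perturbation of `u` in direction `y` keeps the signs of
`dpL u` where nonzero and takes signs from `dpL y` where `dpL u` vanishes. -/
lemma exists_perturb (G : Finset (Fin d → ℝ)) (u y : Fin d → ℝ)
    (h0 : ∀ g ∈ G, dpL u g = 0 → dpL y g ≠ 0) :
    ∃ w, ∀ g ∈ G, dpL w g ≠ 0 ∧
      (dpL u g ≠ 0 → (0 < dpL w g ↔ 0 < dpL u g)) ∧
      (dpL u g = 0 → (0 < dpL w g ↔ 0 < dpL y g)) := by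
  rcases G.eq_empty_or_nonempty with rfl | hne
  · exact ⟨0, by simp⟩
  set r : (Fin d → ℝ) → ℝ := fun g =>
    if dpL u g = 0 then 1 else |dpL u g| / (|dpL y g| + 1) with hr
  have hrpos : ∀ g ∈ G, 0 < r g := by
    intro g hg
    by_cases h : dpL u g = 0
    · simp only [hr, if_pos h]
      norm_num
    · have h1 : (0:ℝ) < |dpL u g| := abs_pos.2 h
      simp only [hr, if_neg h]
      positivity
  set ε := G.inf' hne r with hε
  have hεpos : 0 < ε := by
    rw [hε, Finset.lt_inf'_iff]
    exact hrpos
  have hεle : ∀ g ∈ G, ε ≤ r g := fun g hg => Finset.inf'_le r hg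
  refine ⟨u + ε • y, fun g hg => ?_⟩
  rw [dpL_add_left, dpL_smul_left]
  by_cases h : dpL u g = 0
  · rw [h, zero_add]
    have hy := h0 g hg h
    refine ⟨mul_ne_zero hεpos.ne' hy, fun hc => absurd rfl hc, fun _ => ?_⟩
    constructor
    · intro hp
      by_contra hnp
      push_neg at hnp
      nlinarith [mul_nonpos_of_nonneg_of_nonpos hεpos.le hnp]
    · intro hp
      exact mul_pos hεpos hp
  · have hb : ε * |dpL y g| < |dpL u g| := by
      have h1 : ε ≤ |dpL u g| / (|dpL y g| + 1) := by
        have := hεle g hg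
        rw [hr] at this
        simpa [h] using this
      have h2 : ε * (|dpL y g| + 1) ≤ |dpL u g| :=
        (le_div_iff₀ (by positivity)).1 h1
      nlinarith [abs_nonneg (dpL y g)]
    have habs : |ε * dpL y g| < |dpL u g| := by
      rw [abs_mul, abs_of_pos hεpos]; exact hb
    constructor
    · intro hc
      rcases abs_lt.1 habs with ⟨h1, h2⟩
      rcases lt_or_gt_of_ne h with hlt | hgt
      · rw [abs_of_neg hlt] at h2; linarith
      · rw [abs_of_pos hgt] at h1; linarith
    refine ⟨fun _ => ?_, fun hc => (h hc).elim⟩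
    rcases abs_lt.1 habs with ⟨h1, h2⟩
    constructor
    · intro hp
      by_contra hnp
      push_neg at hnp
      have : dpL u g < 0 := lt_of_le_of_ne hnp h
      rw [abs_of_neg this] at h1 h2
      linarith
    · intro hp
      rw [abs_of_pos hp] at h1 h2
      linarith

/-- The point of `Z` maximizing a functional that is nonzero on all generators is an
extreme point of `Z`. -/
lemma vertex_mem_extremePoints (G : Finset (Fin d → ℝ)) (t : Fin d → ℝ)
    (Z : Set (Fin d → ℝ))
    (hZeq : Z = {x | ∃ c : (Fin d → ℝ) → ℝ, (∀ g, 0 ≤ c g ∧ c g ≤ 1) ∧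
      x = t + ∑ g ∈ G, c g • g})
    (w : Fin d → ℝ) (hw : ∀ g ∈ G, dpL w g ≠ 0) :
    (t + ∑ g ∈ G.filter (fun g => 0 < dpL w g), g) ∈ Set.extremePoints ℝ Z := by
  set v := t + ∑ g ∈ G.filter (fun g => 0 < dpL w g), g with hv
  have hsum_eq : ∀ c : (Fin d → ℝ) → ℝ,
      (∑ g ∈ G, c g • g : Fin d → ℝ) = ∑ g ∈ G, c g • g := fun _ => rfl
  have hvZ : v ∈ Z := by
    rw [hZeq]
    refine ⟨fun g => if 0 < dpL w g then 1 else 0, fun g => ?_, ?_⟩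
    · by_cases h : 0 < dpL w g <;> simp [h]
    · rw [hv, Finset.sum_filter]
      congr 1
      refine Finset.sum_congr rfl fun g _ => ?_
      by_cases h : 0 < dpL w g <;> simp [h]
  have hval : ∀ x ∈ Z, dpL w x ≤ dpL w v ∧ (dpL w x = dpL w v → x = v) := by
    intro x hx
    rw [hZeq] at hx
    obtain ⟨c, hc, rfl⟩ := hx
    have hx_val : dpL w (t + ∑ g ∈ G, c g • g) = dpL w t + ∑ g ∈ G, c g * dpL w g := by
      rw [map_add, map_sum]
      congr 1
      exact Finset.sum_congr rfl fun g _ => by rw [map_smul, smul_eq_mul]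
    have hv_val : dpL w v = dpL w t + ∑ g ∈ G, (if 0 < dpL w g then dpL w g else 0) := by
      rw [hv, map_add, map_sum, ← Finset.sum_filter]
    have hle : ∀ g ∈ G, c g * dpL w g ≤ if 0 < dpL w g then dpL w g else 0 := by
      intro g hg
      by_cases h : 0 < dpL w g
      · rw [if_pos h]
        nlinarith [(hc g).1, (hc g).2]
      · rw [if_neg h]
        have hneg : dpL w g < 0 := lt_of_le_of_ne (not_lt.1 h) (hw g hg)
        nlinarith [(hc g).1, (hc g).2]
    constructor
    · rw [hx_val, hv_val]
      exact add_le_add_right (Finset.sum_le_sum hle) _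
    · intro heq
      rw [hx_val, hv_val] at heq
      have hsums : ∑ g ∈ G, c g * dpL w g
          = ∑ g ∈ G, (if 0 < dpL w g then dpL w g else 0) := by linarith
      have hterm := (Finset.sum_eq_sum_iff_of_le hle).1 hsums
      have : (∑ g ∈ G, c g • g : Fin d → ℝ)
          = ∑ g ∈ G, (if 0 < dpL w g then g else 0) := by
        refine Finset.sum_congr rfl fun g hg => ?_
        have ht := hterm g hg
        by_cases h : 0 < dpL w g
        · rw [if_pos h] at ht ⊢
          have : c g = 1 :=
            mul_right_cancel₀ h.ne' (by rw [one_mul]; exact ht)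
          rw [this, one_smul]
        · rw [if_neg h] at ht ⊢
          have hneg : dpL w g ≠ 0 := hw g hg
          have : c g = 0 := by
            rcases mul_eq_zero.1 ht with h1 | h2
            · exact h1
            · exact absurd h2 hneg
          rw [this, zero_smul]
      rw [this, hv, ← Finset.sum_filter]
  rw [mem_extremePoints]
  refine ⟨hvZ, fun x₁ h₁ x₂ h₂ hseg => ?_⟩
  obtain ⟨a, b, ha, hb, hab, habv⟩ := hseg
  have e1 := hval x₁ h₁
  have e2 := hval x₂ h₂
  have hcomb : a * dpL w x₁ + b * dpL w x₂ = dpL w v := by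
    rw [← habv, map_add, map_smul, map_smul, smul_eq_mul, smul_eq_mul]
  have hvv : a * dpL w v + b * dpL w v = dpL w v := by
    rw [← add_mul, hab, one_mul]
  have heq1 : dpL w x₁ = dpL w v := by
    by_contra hne
    have hlt : dpL w x₁ < dpL w v := lt_of_le_of_ne e1.1 hne
    have k1 := mul_lt_mul_of_pos_left hlt ha
    have k2 := mul_le_mul_of_nonneg_left e2.1 hb.le
    linarith
  have heq2 : dpL w x₂ = dpL w v := by
    by_contra hne
    have hlt : dpL w x₂ < dpL w v := lt_of_le_of_ne e2.1 hne
    have k1 := mul_lt_mul_of_pos_left hlt hb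
    have k2 := mul_le_mul_of_nonneg_left e1.1 ha.le
    linarith
  exact ⟨e1.2 heq1, e2.2 heq2⟩

end HIZaux

open HIZaux

/-- For a half-integral zonotope with generator set `𝒢`: for each coordinate `i`, at most
two generators have nonzero `i`-th coordinate, and if there are exactly two, then the
absolute value of the `i`-th coordinate of each of them is `1/2`. -/
theorem halfIntegral_zonotope_generators_coord {d : ℕ} (Z : Set (Fin d → ℝ))
    (G : Finset (Fin d → ℝ)) (hZ : IsZonotopeWithGenerators Z G)
    (hHI : IsHalfIntegral Z) (i : Fin d) :
    {g : Fin d → ℝ | g ∈ G ∧ g i ≠ 0}.ncard ≤ 2 ∧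
      ({g : Fin d → ℝ | g ∈ G ∧ g i ≠ 0}.ncard = 2 →
        ∀ g ∈ G, g i ≠ 0 → |g i| = 1/2) := by
  obtain ⟨hgen0, hcol, t, hZeq⟩ := hZ
  -- every generator with nonzero i-th coordinate has |g i| ≥ 1/2
  have hhalf : ∀ g₀ ∈ G, g₀ i ≠ 0 → 1/2 ≤ |g₀ i| := by
    intro g₀ hg₀ hgi
    have hg₀0 : g₀ ≠ 0 := hgen0 g₀ hg₀
    obtain ⟨y, hyperp, hygen⟩ := exists_generic_perp hg₀0 (G.erase g₀)
      (fun h hh r => hcol h (Finset.mem_of_mem_erase hh) g₀ hg₀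
        (Finset.ne_of_mem_erase hh) r)
    have h0p : ∀ g ∈ G, dpL y g = 0 → dpL g₀ g ≠ 0 := by
      intro g hg hyg
      by_cases hgg : g = g₀
      · subst hgg; exact (dpL_self_pos hg₀0).ne'
      · exact absurd hyg (hygen g (Finset.mem_erase.2 ⟨hgg, hg⟩))
    have h0m : ∀ g ∈ G, dpL y g = 0 → dpL (-g₀) g ≠ 0 := by
      intro g hg hyg
      rw [dpL_neg_left]
      exact neg_ne_zero.2 (h0p g hg hyg)
    obtain ⟨wp, hwp⟩ := exists_perturb G y g₀ h0p
    obtain ⟨wm, hwm⟩ := exists_perturb G y (-g₀) h0m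
    set Fp := G.filter (fun g => 0 < dpL wp g) with hFpdef
    set Fm := G.filter (fun g => 0 < dpL wm g) with hFmdef
    have hg₀Fm : g₀ ∉ Fm := by
      rw [hFmdef]
      intro hmem
      have h3 := ((hwm g₀ hg₀).2.2 hyperp).1 (Finset.mem_filter.1 hmem).2
      rw [dpL_neg_left] at h3
      exact absurd h3 (by simp [le_of_lt (dpL_self_pos hg₀0)])
    have hFp : Fp = insert g₀ Fm := by
      ext g
      rw [hFpdef, hFmdef, Finset.mem_insert, Finset.mem_filter, Finset.mem_filter]
      constructor
      · rintro ⟨hg, hpos⟩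
        by_cases hgg : g = g₀
        · exact Or.inl hgg
        · refine Or.inr ⟨hg, ?_⟩
          have hyg : dpL y g ≠ 0 := hygen g (Finset.mem_erase.2 ⟨hgg, hg⟩)
          have e1 := ((hwp g hg).2.1 hyg).1 hpos
          exact ((hwm g hg).2.1 hyg).2 e1
      · rintro (rfl | ⟨hg, hpos⟩)
        · exact ⟨hg₀, ((hwp g hg₀).2.2 hyperp).2 (dpL_self_pos hg₀0)⟩
        · by_cases hgg : g = g₀
          · subst hgg
            exact absurd (Finset.mem_filter.2 ⟨hg, hpos⟩) (hFmdef ▸ hg₀Fm)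
          · have hyg : dpL y g ≠ 0 := hygen g (Finset.mem_erase.2 ⟨hgg, hg⟩)
            have e1 := ((hwm g hg).2.1 hyg).1 hpos
            exact ⟨hg, ((hwp g hg).2.1 hyg).2 e1⟩
    have hA := hHI _ (vertex_mem_extremePoints G t Z hZeq wp
      (fun g hg => (hwp g hg).1)) i
    have hB := hHI _ (vertex_mem_extremePoints G t Z hZeq wm
      (fun g hg => (hwm g hg).1)) i
    rw [← hFpdef] at hA
    rw [← hFmdef] at hB
    have hdiff : (t + ∑ g ∈ Fp, g) i = (t + ∑ g ∈ Fm, g) i + g₀ i := by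
      rw [hFp, Finset.sum_insert hg₀Fm]
      simp only [Pi.add_apply, Finset.sum_apply]
      ring
    rcases hA with h | h | h <;> rcases hB with h' | h' | h' <;>
      rw [h, h'] at hdiff <;>
      rcases abs_cases (g₀ i) with ⟨he, hs⟩ | ⟨he, hs⟩ <;> rw [he] <;>
      first
        | linarith
        | (exfalso; exact hgi (by linarith))
  -- the sum of |g i| over all generators is at most 1
  have hsum : ∑ g ∈ G, |g i| ≤ 1 := by
    obtain ⟨y, hy⟩ := exists_generic G hgen0
    obtain ⟨wp, hwp⟩ := exists_perturb G (Pi.single i 1) y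
      (fun g hg _ => hy g hg)
    obtain ⟨wm, hwm⟩ := exists_perturb G (-(Pi.single i 1)) y
      (fun g hg _ => hy g hg)
    set Fp := G.filter (fun g => 0 < dpL wp g) with hFpdef
    set Fm := G.filter (fun g => 0 < dpL wm g) with hFmdef
    have hA := hHI _ (vertex_mem_extremePoints G t Z hZeq wp
      (fun g hg => (hwp g hg).1)) i
    have hB := hHI _ (vertex_mem_extremePoints G t Z hZeq wm
      (fun g hg => (hwm g hg).1)) i
    rw [← hFpdef] at hA
    rw [← hFmdef] at hB
    have hFpsum : ∑ g ∈ Fp, g i = ∑ g ∈ G.filter (fun g => 0 < g i), g i := by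
      rw [← Finset.sum_filter_ne_zero Fp]
      apply Finset.sum_congr _ (fun _ _ => rfl)
      ext g
      rw [Finset.mem_filter, hFpdef, Finset.mem_filter, Finset.mem_filter]
      constructor
      · rintro ⟨⟨hg, hpos⟩, hne⟩
        have := (hwp g hg).2.1 (by rwa [dpL_single])
        rw [dpL_single] at this
        exact ⟨hg, this.1 hpos⟩
      · rintro ⟨hg, hpos⟩
        have := (hwp g hg).2.1 (by rw [dpL_single]; exact hpos.ne')
        rw [dpL_single] at this
        exact ⟨⟨hg, this.2 hpos⟩, hpos.ne'⟩
    have hFmsum : ∑ g ∈ Fm, g i = ∑ g ∈ G.filter (fun g => g i < 0), g i := by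
      rw [← Finset.sum_filter_ne_zero Fm]
      apply Finset.sum_congr _ (fun _ _ => rfl)
      ext g
      rw [Finset.mem_filter, hFmdef, Finset.mem_filter, Finset.mem_filter]
      have hneg : ∀ hg : g ∈ G, g i ≠ 0 → (0 < dpL wm g ↔ 0 < -(g i)) := by
        intro hg hne
        have := (hwm g hg).2.1
          (by rw [dpL_neg_left, dpL_single]; exact neg_ne_zero.2 hne)
        rwa [dpL_neg_left, dpL_single] at this
      constructor
      · rintro ⟨⟨hg, hpos⟩, hne⟩
        have := (hneg hg hne).1 hpos
        exact ⟨hg, by linarith⟩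
      · rintro ⟨hg, hpos⟩
        have hne : g i ≠ 0 := ne_of_lt hpos
        exact ⟨⟨hg, (hneg hg hne).2 (by linarith)⟩, hne⟩
    have habs : ∑ g ∈ G.filter (fun g => 0 < g i), g i
        - ∑ g ∈ G.filter (fun g => g i < 0), g i = ∑ g ∈ G, |g i| := by
      rw [Finset.sum_filter, Finset.sum_filter, ← Finset.sum_sub_distrib]
      refine Finset.sum_congr rfl fun g _ => ?_
      rcases lt_trichotomy (g i) 0 with h | h | h
      · rw [if_neg (by linarith), if_pos h, abs_of_neg h]; ring
      · simp [h]
      · rw [if_pos h, if_neg (by linarith), abs_of_pos h]; ring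
    have hcoordp : (t + ∑ g ∈ Fp, g) i = t i + ∑ g ∈ Fp, g i := by
      simp [Finset.sum_apply]
    have hcoordm : (t + ∑ g ∈ Fm, g) i = t i + ∑ g ∈ Fm, g i := by
      simp [Finset.sum_apply]
    rw [hcoordp, hFpsum] at hA
    rw [hcoordm, hFmsum] at hB
    rcases hA with h | h | h <;> rcases hB with h' | h' | h' <;> linarith
  -- conclude
  classical
  set T := G.filter (fun g => g i ≠ 0) with hT
  have hsetT : {g : Fin d → ℝ | g ∈ G ∧ g i ≠ 0} = ↑T := by
    ext g; simp [hT]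
  rw [hsetT, Set.ncard_coe_finset]
  have hsumT : ∑ g ∈ T, |g i| ≤ 1 :=
    le_trans (Finset.sum_le_sum_of_subset_of_nonneg (Finset.filter_subset _ _)
      (fun g _ _ => abs_nonneg _)) hsum
  have hlbT : ∀ g ∈ T, (1:ℝ)/2 ≤ |g i| := fun g hg =>
    hhalf g (Finset.mem_filter.1 hg).1 (Finset.mem_filter.1 hg).2
  have hcard : (T.card : ℝ) * (1/2) ≤ ∑ g ∈ T, |g i| := by
    calc (T.card : ℝ) * (1/2) = ∑ _g ∈ T, (1:ℝ)/2 := by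
          rw [Finset.sum_const, nsmul_eq_mul]
      _ ≤ ∑ g ∈ T, |g i| := Finset.sum_le_sum hlbT
  have hc2 : T.card ≤ 2 := by
    by_contra hc
    push_neg at hc
    have h3 : (3:ℝ) ≤ (T.card : ℝ) := by exact_mod_cast hc
    linarith
  refine ⟨hc2, fun hcard2 g hgG hgi => ?_⟩
  have hgT : g ∈ T := Finset.mem_filter.2 ⟨hgG, hgi⟩
  have hsplit : |g i| + ∑ h ∈ T.erase g, |h i| = ∑ h ∈ T, |h i| :=
    Finset.add_sum_erase T (fun x => |x i|) hgT
  have hcerase : (T.erase g).card = 1 := by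
    rw [Finset.card_erase_of_mem hgT, hcard2]
  have hrest : (1:ℝ)/2 ≤ ∑ h ∈ T.erase g, |h i| := by
    have hkey := Finset.card_nsmul_le_sum (T.erase g) (fun h => |h i|) (1/2)
      (fun h hh => hlbT h (Finset.mem_of_mem_erase hh))
    rw [hcerase] at hkey
    simpa using hkey
  exact le_antisymm (by linarith) (hlbT g hgT)
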